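/- Let H be a semisimple Hopf algebra with normalized integral ∫ acting on an algebra R, and e = 1 # ∫ ∈ B := R # H. Then the corner ring e B e is isomorphic as a k-algebra to the fixed subring R^H = {r ∈ R : h·r = ε(h)r for all h ∈ H}. -/
import Mathlib


noncomputable section

open TensorProduct

variable {k A H : Type*} [Field k] [Ring A] [Algebra k A] [Ring H] [HopfAlgebra k H]

/-- The action `H ⊗ A → A` as a linear map. -/
def actT (act : H →ₗ[k] A →ₗ[k] A) : H ⊗[k] A →ₗ[k] A := TensorProduct.lift act

/-- The map `h ⊗ (x' ⊗ h') ↦ Σ (h₁·x') ⊗ (h₂h')`. -/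
def smashHalf (act : H →ₗ[k] A →ₗ[k] A) : H ⊗[k] (A ⊗[k] H) →ₗ[k] A ⊗[k] H :=
  (TensorProduct.map (actT act) (LinearMap.mul' k H)) ∘ₗ
    (TensorProduct.tensorTensorTensorComm k H H A H).toLinearMap ∘ₗ
    (TensorProduct.map (Coalgebra.comul (R := k)) LinearMap.id)

/-- The multiplication of the smash product `A # H`:
`(x # h)(x' # h') = Σ x(h₁·x') # h₂h'`. -/
def smashMul (act : H →ₗ[k] A →ₗ[k] A) :
    (A ⊗[k] H) →ₗ[k] (A ⊗[k] H) →ₗ[k] A ⊗[k] H :=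
  TensorProduct.curry
    ((TensorProduct.map (LinearMap.mul' k A) LinearMap.id) ∘ₗ
      (TensorProduct.assoc k A A H).symm.toLinearMap ∘ₗ
      (TensorProduct.map LinearMap.id (smashHalf act)) ∘ₗ
      (TensorProduct.assoc k A H (A ⊗[k] H)).toLinearMap)

/-- The corner `e·(A#H)·e` of the smash product at `e = 1 # ∫`, as a `k`-submodule. -/
def smashCorner (act : H →ₗ[k] A →ₗ[k] A) (intg : H) : Submodule k (A ⊗[k] H) :=
  LinearMap.range
    ((smashMul act ((1 : A) ⊗ₜ[k] intg)) ∘ₗ ((smashMul act).flip ((1 : A) ⊗ₜ[k] intg)))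

/-- The fixed subring `R^H = {r | h·r = ε(h)r}`, as a `k`-submodule of `R`. -/
def hInvariants (act : H →ₗ[k] A →ₗ[k] A) : Submodule k A where
  carrier := {x | ∀ h : H, act h x = Coalgebra.counit (R := k) h • x}
  add_mem' := fun hx hy h => by rw [map_add, hx h, hy h, smul_add]
  zero_mem' := fun h => by rw [map_zero, smul_zero]
  smul_mem' := fun c x hx h => by rw [map_smul, hx h, smul_comm]

set_option synthInstance.maxHeartbeats 1000000 in
set_option maxHeartbeats 1000000 in
lemma smashMul_tmul (act : H →ₗ[k] A →ₗ[k] A) (x x' : A) (h h' : H)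
    {ι : Type*} (s : Finset ι) (a b : ι → H)
    (hc : Coalgebra.comul (R := k) h = ∑ i ∈ s, a i ⊗ₜ[k] b i) :
    smashMul act (x ⊗ₜ[k] h) (x' ⊗ₜ[k] h') =
      ∑ i ∈ s, (x * act (a i) x') ⊗ₜ[k] (b i * h') := by
  simp only [smashMul, smashHalf, actT, TensorProduct.curry_apply, LinearMap.coe_comp,
    Function.comp_apply, LinearEquiv.coe_coe, TensorProduct.assoc_tmul,
    TensorProduct.map_tmul, LinearMap.id_coe, id_eq, hc, TensorProduct.sum_tmul,
    map_sum, TensorProduct.tensorTensorTensorComm_tmul, TensorProduct.assoc_symm_tmul,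
    LinearMap.mul'_apply, TensorProduct.lift.tmul, TensorProduct.tmul_sum]

lemma sum_counit_smul_right {ι : Type*} (s : Finset ι) (a b : ι → H) (h : H)
    (hc : Coalgebra.comul (R := k) h = ∑ i ∈ s, a i ⊗ₜ[k] b i) :
    ∑ i ∈ s, Coalgebra.counit (R := k) (a i) • b i = h := by
  have := congrArg ((TensorProduct.lid k H).toLinearMap ∘ₗ
    LinearMap.rTensor H (Coalgebra.counit (R := k))) hc
  simpa [map_sum] using this.symm

lemma sum_counit_smul_left {ι : Type*} (s : Finset ι) (a b : ι → H) (h : H)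
    (hc : Coalgebra.comul (R := k) h = ∑ i ∈ s, a i ⊗ₜ[k] b i) :
    ∑ i ∈ s, Coalgebra.counit (R := k) (b i) • a i = h := by
  have := congrArg ((TensorProduct.rid k H).toLinearMap ∘ₗ
    LinearMap.lTensor H (Coalgebra.counit (R := k))) hc
  simpa [map_sum] using this.symm


/-- Projection `x ⊗ h ↦ ε(h) • x`. -/
def smashProj : A ⊗[k] H →ₗ[k] A :=
  (TensorProduct.rid k A).toLinearMap ∘ₗ LinearMap.lTensor A (Coalgebra.counit (R := k))

@[simp] lemma smashProj_tmul (x : A) (h : H) :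
    smashProj (x ⊗ₜ[k] h) = Coalgebra.counit (R := k) h • x := by
  simp [smashProj]

section main

variable (act : H →ₗ[k] A →ₗ[k] A) (intg : H)
variable (hunit : ∀ h : H, act h 1 = Coalgebra.counit (R := k) h • (1 : A))
variable (hint : ∀ h : H, h * intg = Coalgebra.counit (R := k) h • intg ∧
      intg * h = Coalgebra.counit (R := k) h • intg)

include hunit hint in
lemma mul_e (u : A ⊗[k] H) :
    smashMul act u ((1 : A) ⊗ₜ[k] intg) = smashProj u ⊗ₜ[k] intg := by
  induction u using TensorProduct.induction_on with
  | zero => simp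
  | add u v hu hv => rw [map_add, LinearMap.add_apply, hu, hv, map_add, add_tmul]
  | tmul x h =>
    obtain ⟨s, hs⟩ := TensorProduct.exists_finset (Coalgebra.comul (R := k) h)
    rw [smashMul_tmul act x 1 h intg s (fun i => i.1) (fun i => i.2) hs]
    have key : ∑ i ∈ s, Coalgebra.counit (R := k) i.1 • i.2 = h :=
      sum_counit_smul_right s _ _ h hs
    calc ∑ i ∈ s, (x * act i.1 1) ⊗ₜ[k] (i.2 * intg)
        = ∑ i ∈ s, (Coalgebra.counit (R := k) i.1 * Coalgebra.counit (R := k) i.2) •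
            (x ⊗ₜ[k] intg) := by
          refine Finset.sum_congr rfl fun i _ => ?_
          rw [hunit, (hint i.2).1, mul_smul]
          simp only [TensorProduct.smul_tmul', TensorProduct.tmul_smul, mul_smul,
            mul_smul_comm, mul_one]
          rw [smul_comm]
      _ = (Coalgebra.counit (R := k) h) • (x ⊗ₜ[k] intg) := by
          rw [← Finset.sum_smul]
          congr 1
          calc ∑ i ∈ s, Coalgebra.counit (R := k) i.1 * Coalgebra.counit (R := k) i.2
              = Coalgebra.counit (R := k)
                  (∑ i ∈ s, Coalgebra.counit (R := k) i.1 • i.2) := by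
                simp [map_sum]
            _ = _ := by rw [key]
      _ = smashProj (x ⊗ₜ[k] h) ⊗ₜ[k] intg := by
          rw [smashProj_tmul, TensorProduct.smul_tmul']

include hint in
lemma e_mul (x y : A) :
    smashMul act (x ⊗ₜ[k] intg) (y ⊗ₜ[k] intg) = (x * act intg y) ⊗ₜ[k] intg := by
  obtain ⟨s, hs⟩ := TensorProduct.exists_finset (Coalgebra.comul (R := k) intg)
  rw [smashMul_tmul act x y intg intg s (fun i => i.1) (fun i => i.2) hs]
  have key : ∑ i ∈ s, Coalgebra.counit (R := k) i.2 • i.1 = intg :=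
    sum_counit_smul_left s _ _ intg hs
  calc ∑ i ∈ s, (x * act i.1 y) ⊗ₜ[k] (i.2 * intg)
      = ∑ i ∈ s, (x * act (Coalgebra.counit (R := k) i.2 • i.1) y) ⊗ₜ[k] intg := by
        refine Finset.sum_congr rfl fun i _ => ?_
        rw [(hint i.2).1]
        simp only [map_smul, LinearMap.smul_apply, TensorProduct.tmul_smul,
          mul_smul_comm, TensorProduct.smul_tmul']
    _ = (x * act intg y) ⊗ₜ[k] intg := by
        have h2 : ∑ i ∈ s, act (Coalgebra.counit (R := k) i.2 • i.1) y = act intg y := by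
          rw [← key, map_sum, LinearMap.sum_apply]
        rw [← TensorProduct.sum_tmul, ← Finset.mul_sum, h2]



lemma sum_counit_mul {ι : Type*} (s : Finset ι) (a b : ι → H) (h : H)
    (hc : Coalgebra.comul (R := k) h = ∑ i ∈ s, a i ⊗ₜ[k] b i) :
    ∑ i ∈ s, Coalgebra.counit (R := k) (a i) * Coalgebra.counit (R := k) (b i) =
      Coalgebra.counit (R := k) h := by
  have := congrArg (Coalgebra.counit (R := k)) (sum_counit_smul_right s a b h hc)
  simpa [map_sum, smul_eq_mul] using this

end main

/-- Let `H` be a semisimple Hopf algebra with normalized two-sided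
integral `∫` acting on an algebra `R`, and `e = 1 # ∫ ∈ B = R # H`.  Then the corner ring
`eBe` is isomorphic as a `k`-algebra to the fixed subring `R^H`: there is a `k`-linear
equivalence which is multiplicative and sends `e` to `1`. -/
theorem smash_corner_iso_invariants [FiniteDimensional k H]
    (act : H →ₗ[k] A →ₗ[k] A)
    (hact1 : ∀ x : A, act 1 x = x)
    (hactmul : ∀ (h h' : H) (x : A), act (h * h') x = act h (act h' x))
    (hma : ∀ (h : H) (x y : A) {ι : Type} (s : Finset ι) (a b : ι → H),
      Coalgebra.comul (R := k) h = ∑ i ∈ s, a i ⊗ₜ[k] b i →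
        act h (x * y) = ∑ i ∈ s, act (a i) x * act (b i) y)
    (hunit : ∀ h : H, act h 1 = Coalgebra.counit (R := k) h • (1 : A))
    (intg : H)
    (hint : ∀ h : H, h * intg = Coalgebra.counit (R := k) h • intg ∧
      intg * h = Coalgebra.counit (R := k) h • intg)
    (hnorm : Coalgebra.counit (R := k) intg = 1) :
    ∃ (Φ : smashCorner act intg ≃ₗ[k] hInvariants act)
      (hmem : ∀ u v : A ⊗[k] H, u ∈ smashCorner act intg → v ∈ smashCorner act intg →
        smashMul act u v ∈ smashCorner act intg)
      (he : (1 : A) ⊗ₜ[k] intg ∈ smashCorner act intg),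
        (∀ (u v : A ⊗[k] H) (hu : u ∈ smashCorner act intg)
            (hv : v ∈ smashCorner act intg),
          (Φ ⟨smashMul act u v, hmem u v hu hv⟩ : A) = (Φ ⟨u, hu⟩ : A) * (Φ ⟨v, hv⟩ : A)) ∧
        (Φ ⟨(1 : A) ⊗ₜ[k] intg, he⟩ : A) = 1 := by
  classical
  -- invariants are closed under multiplication
  have hinv_mul : ∀ x y : A, x ∈ hInvariants act → y ∈ hInvariants act →
      x * y ∈ hInvariants act := by
    intro x y hx hy h
    obtain ⟨s, hs⟩ := TensorProduct.exists_finset (Coalgebra.comul (R := k) h)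
    have hs' : Coalgebra.comul (R := k) h =
        ∑ j : Fin s.card, (s.equivFin.symm j).1.1 ⊗ₜ[k] (s.equivFin.symm j).1.2 := by
      rw [hs, ← Finset.sum_coe_sort s (fun i => i.1 ⊗ₜ[k] i.2),
        ← Equiv.sum_comp s.equivFin.symm]
    rw [hma h x y Finset.univ _ _ hs']
    have key := sum_counit_mul Finset.univ
      (fun j : Fin s.card => (s.equivFin.symm j).1.1)
      (fun j : Fin s.card => (s.equivFin.symm j).1.2) h hs'
    calc ∑ j : Fin s.card, act (s.equivFin.symm j).1.1 x * act (s.equivFin.symm j).1.2 y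
        = ∑ j : Fin s.card, (Coalgebra.counit (R := k) (s.equivFin.symm j).1.1 *
            Coalgebra.counit (R := k) (s.equivFin.symm j).1.2) • (x * y) := by
          refine Finset.sum_congr rfl fun j _ => ?_
          rw [hx, hy, smul_mul_assoc, mul_smul_comm, mul_smul]
      _ = Coalgebra.counit (R := k) h • (x * y) := by rw [← Finset.sum_smul, key]
  -- invariance of `act intg`
  have hintinv : ∀ x : A, act intg x ∈ hInvariants act := by
    intro x h
    rw [← hactmul, (hint h).1, map_smul, LinearMap.smul_apply]
  -- characterization of the corner
  have hmemiff : ∀ u : A ⊗[k] H, u ∈ smashCorner act intg ↔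
      ∃ x, x ∈ hInvariants act ∧ u = x ⊗ₜ[k] intg := by
    intro u
    constructor
    · rintro ⟨v, rfl⟩
      refine ⟨act intg (smashProj v), hintinv _, ?_⟩
      simp only [LinearMap.coe_comp, Function.comp_apply, LinearMap.flip_apply]
      rw [mul_e act intg hunit hint v, e_mul act intg hint, one_mul]
    · rintro ⟨x, hx, rfl⟩
      refine ⟨x ⊗ₜ[k] (1 : H), ?_⟩
      simp only [LinearMap.coe_comp, Function.comp_apply, LinearMap.flip_apply]
      rw [mul_e act intg hunit hint (x ⊗ₜ[k] (1 : H)), smashProj_tmul,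
        Bialgebra.counit_one, one_smul, e_mul act intg hint, one_mul,
        hx intg, hnorm, one_smul]
  -- forward and backward maps
  have projmem : ∀ u : smashCorner act intg,
      (smashProj ∘ₗ (smashCorner act intg).subtype) u ∈ hInvariants act := by
    intro u
    obtain ⟨x, hx, hxe⟩ := (hmemiff u.1).1 u.2
    simp only [LinearMap.coe_comp, Function.comp_apply, Submodule.coe_subtype, hxe,
      smashProj_tmul, hnorm, one_smul]
    exact hx
  set f : smashCorner act intg →ₗ[k] hInvariants act :=
    LinearMap.codRestrict (hInvariants act)
      (smashProj ∘ₗ (smashCorner act intg).subtype) projmem with hf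
  set g : hInvariants act →ₗ[k] smashCorner act intg :=
    LinearMap.codRestrict (smashCorner act intg)
      (((TensorProduct.mk k A H).flip intg) ∘ₗ (hInvariants act).subtype)
      (fun x => (hmemiff _).2 ⟨x.1, x.2, rfl⟩) with hg
  have hfval : ∀ u : smashCorner act intg, (f u : A) = smashProj u.1 := fun u => rfl
  have hgval : ∀ x : hInvariants act, ((g x : smashCorner act intg) : A ⊗[k] H)
      = (x : A) ⊗ₜ[k] intg := fun x => rfl
  have hfg : f ∘ₗ g = LinearMap.id := by
    refine LinearMap.ext fun x => Subtype.ext ?_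
    simp only [LinearMap.coe_comp, Function.comp_apply, LinearMap.id_coe, id_eq]
    rw [hfval, hgval, smashProj_tmul, hnorm, one_smul]
  have hgf : g ∘ₗ f = LinearMap.id := by
    refine LinearMap.ext fun u => Subtype.ext ?_
    obtain ⟨x, hx, hxe⟩ := (hmemiff u.1).1 u.2
    simp only [LinearMap.coe_comp, Function.comp_apply, LinearMap.id_coe, id_eq]
    rw [hgval]
    have : (f u : A) = x := by rw [hfval, hxe, smashProj_tmul, hnorm, one_smul]
    rw [this, hxe]
  refine ⟨LinearEquiv.ofLinear f g hfg hgf, ?_, ?_, ?_, ?_⟩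
  · -- closure under multiplication
    intro u v hu hv
    obtain ⟨x, hx, rfl⟩ := (hmemiff u).1 hu
    obtain ⟨y, hy, rfl⟩ := (hmemiff v).1 hv
    rw [e_mul act intg hint, hy intg, hnorm, one_smul]
    exact (hmemiff _).2 ⟨x * y, hinv_mul x y hx hy, rfl⟩
  · exact (hmemiff _).2 ⟨1, fun h => by rw [hunit], rfl⟩
  · intro u v hu hv
    obtain ⟨x, hx, rfl⟩ := (hmemiff u).1 hu
    obtain ⟨y, hy, rfl⟩ := (hmemiff v).1 hv
    show (f ⟨_, _⟩ : A) = (f ⟨_, hu⟩ : A) * (f ⟨_, hv⟩ : A)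
    rw [hfval, hfval, hfval]
    simp only [smashProj_tmul, hnorm, one_smul]
    rw [e_mul act intg hint, hy intg, hnorm, one_smul, smashProj_tmul, hnorm, one_smul]
  · show (f ⟨_, _⟩ : A) = 1
    rw [hfval, smashProj_tmul, hnorm, one_smul]

end
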